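/- Let H be a complex Hilbert space with dim H ≥ 2 and let S, T be nonzero bounded linear operators on H. Then ε̂(ST) ≤ (‖S‖²‖T‖² − m(S)²m(T)²)/(‖S‖²‖T‖² + m(S)²m(T)²). -/

import Mathlib

open scoped ComplexInnerProductSpace

noncomputable section

variable {H : Type*} [NormedAddCommGroup H] [InnerProductSpace ℂ H] [CompleteSpace H]

/-- `T` is `ε`-approximately orthogonality preserving: orthogonal vectors are mapped to
`ε`-orthogonal vectors. -/
def IsAOP (T : H →L[ℂ] H) (ε : ℝ) : Prop :=
  ∀ x y : H, ⟪x, y⟫ = 0 → ‖⟪T x, T y⟫‖ ≤ ε * (‖T x‖ * ‖T y‖)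

/-- `ε̂(T)`, the smallest `ε ∈ [0,1]` for which `T` is `ε`-AOP. -/
def epsHat (T : H →L[ℂ] H) : ℝ :=
  sInf {ε : ℝ | 0 ≤ ε ∧ ε ≤ 1 ∧ IsAOP T ε}

/-- The minimum modulus `m(T) = inf {‖T x‖ : ‖x‖ = 1}`. -/
def minMod (T : H →L[ℂ] H) : ℝ :=
  sInf {r : ℝ | ∃ x : H, ‖x‖ = 1 ∧ ‖T x‖ = r}

/-- The set `ℂ𝒱` of scalar multiples of linear isometries of `H`. -/
def scalarIsoms (H : Type*) [NormedAddCommGroup H] [InnerProductSpace ℂ H] :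
    Set (H →L[ℂ] H) :=
  {S | ∃ (c : ℂ) (V : H →L[ℂ] H), (∀ x : H, ‖V x‖ = ‖x‖) ∧ S = c • V}

/-- `dist(T, ℂ𝒱)`. -/
def distCV (T : H →L[ℂ] H) : ℝ := Metric.infDist T (scalarIsoms H)

/-- The set `𝒱` of linear isometries of `H`. -/
def isoms (H : Type*) [NormedAddCommGroup H] [InnerProductSpace ℂ H] :
    Set (H →L[ℂ] H) :=
  {V | ∀ x : H, ‖V x‖ = ‖x‖}

/-- `dist(T, 𝒱)`. -/
def distV (T : H →L[ℂ] H) : ℝ := Metric.infDist T (isoms H)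

lemma minMod_nonneg (T : H →L[ℂ] H) : 0 ≤ minMod T :=
  Real.sInf_nonneg (by rintro r ⟨x, -, rfl⟩; exact norm_nonneg _)

lemma minMod_mul_le (T : H →L[ℂ] H) (x : H) : minMod T * ‖x‖ ≤ ‖T x‖ := by
  rcases eq_or_ne x 0 with rfl | hx
  · simp
  · have hxn : ‖x‖ ≠ 0 := norm_ne_zero_iff.mpr hx
    set u : H := (‖x‖⁻¹ : ℂ) • x with hu
    have hun : ‖u‖ = 1 := by
      rw [hu, norm_smul]
      simp [norm_inv, hxn]
    have hmem : ‖T u‖ ∈ {r : ℝ | ∃ x : H, ‖x‖ = 1 ∧ ‖T x‖ = r} := ⟨u, hun, rfl⟩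
    have h1 : minMod T ≤ ‖T u‖ :=
      csInf_le ⟨0, by rintro r ⟨y, -, rfl⟩; exact norm_nonneg _⟩ hmem
    have hTu : ‖T u‖ = ‖x‖⁻¹ * ‖T x‖ := by
      rw [hu, map_smul, norm_smul]
      simp
    rw [hTu] at h1
    have := mul_le_mul_of_nonneg_right h1 (norm_nonneg x)
    calc minMod T * ‖x‖ ≤ ‖x‖⁻¹ * ‖T x‖ * ‖x‖ := this
      _ = ‖T x‖ := by field_simp
    
lemma minMod_le_norm [Nontrivial H] (T : H →L[ℂ] H) : minMod T ≤ ‖T‖ := by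
  obtain ⟨x, hx⟩ := exists_ne (0 : H)
  have h := minMod_mul_le T x
  have h2 : ‖T x‖ ≤ ‖T‖ * ‖x‖ := T.le_opNorm x
  have hxn : 0 < ‖x‖ := norm_pos_iff.mpr hx
  nlinarith

set_option maxHeartbeats 1000000 in
lemma isAOP_of_bounds (A : H →L[ℂ] H) (m M : ℝ) (hm : 0 ≤ m) (hM : 0 < M) (hmM : m ≤ M)
    (hlow : ∀ x, m * ‖x‖ ≤ ‖A x‖) (hup : ∀ x, ‖A x‖ ≤ M * ‖x‖) :
    IsAOP A ((M ^ 2 - m ^ 2) / (M ^ 2 + m ^ 2)) := by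
  have hden : (0:ℝ) < M ^ 2 + m ^ 2 := by positivity
  have hε0 : (0:ℝ) ≤ (M ^ 2 - m ^ 2) / (M ^ 2 + m ^ 2) := by
    apply div_nonneg _ hden.le
    nlinarith
  intro x y hxy
  set a := ‖A x‖ with ha
  set b := ‖A y‖ with hb
  by_cases hp : ⟪A x, A y⟫ = 0
  · rw [hp]
    simpa using mul_nonneg hε0 (mul_nonneg (norm_nonneg _) (norm_nonneg _))
  · set p : ℂ := ⟪A x, A y⟫ with hpdef
    set c := ‖p‖ with hc
    have hcpos : 0 < c := norm_pos_iff.mpr hp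
    have hab : c ≤ a * b := norm_inner_le_norm _ _
    have habpos : 0 < a * b := lt_of_lt_of_le hcpos hab
    have hapos : 0 < a := by nlinarith [norm_nonneg (A x), norm_nonneg (A y)]
    have hbpos : 0 < b := by nlinarith [norm_nonneg (A x), norm_nonneg (A y)]
    set lam : ℂ := (starRingEnd ℂ) p / (c : ℂ) with hlam
    have hcne : (c : ℂ) ≠ 0 := by exact_mod_cast hcpos.ne'
    have habs : ‖p‖ ≠ 0 := by simpa [hc] using hcpos.ne'
    have hlamnorm : ‖lam‖ = 1 := by
      rw [hlam, norm_div]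
      simp only [RCLike.norm_conj]
      simp [hc, abs_of_nonneg (norm_nonneg p)]
      exact hp
    have hlamp : lam * p = (c : ℂ) := by
      rw [hlam, div_mul_eq_mul_div]
      rw [RCLike.conj_mul]
      push_cast
      rw [hc]
      have hne : (‖p‖ : ℂ) ≠ 0 := by exact_mod_cast habs
      field_simp
      rfl
    set u : H := (b : ℂ) • x + ((a : ℂ) * lam) • y with hu
    set v : H := (b : ℂ) • x - ((a : ℂ) * lam) • y with hv
    have hXY : ∀ w : H, ⟪(b : ℂ) • x, ((a : ℂ) * lam) • w⟫ =
        (b : ℂ) * ((a : ℂ) * lam) * ⟪x, w⟫ := by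
      intro w
      rw [inner_smul_left, inner_smul_right]
      simp [Complex.conj_ofReal]
      ring
    have hinner0 : ⟪(b : ℂ) • x, ((a : ℂ) * lam) • y⟫ = 0 := by
      rw [hXY, hxy, mul_zero]
    have hnbx : ‖(b : ℂ) • x‖ = b * ‖x‖ := by
      rw [norm_smul]; simp [abs_of_nonneg (norm_nonneg (A y)), hbpos.le]
    have hnay : ‖((a : ℂ) * lam) • y‖ = a * ‖y‖ := by
      rw [norm_smul, norm_mul, hlamnorm]
      simp [abs_of_nonneg (norm_nonneg (A x)), hapos.le]
    have hnu : ‖u‖ ^ 2 = b ^ 2 * ‖x‖ ^ 2 + a ^ 2 * ‖y‖ ^ 2 := by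
      rw [hu, @norm_add_sq ℂ, hinner0, hnbx, hnay]
      simp
      ring
    have hnv : ‖v‖ ^ 2 = b ^ 2 * ‖x‖ ^ 2 + a ^ 2 * ‖y‖ ^ 2 := by
      rw [hv, @norm_sub_sq ℂ, hinner0, hnbx, hnay]
      simp
      ring
    have hAinner : ⟪(b : ℂ) • A x, ((a : ℂ) * lam) • A y⟫ = ((a * b * c : ℝ) : ℂ) := by
      rw [inner_smul_left, inner_smul_right]
      rw [Complex.conj_ofReal]
      push_cast
      rw [← hpdef]
      calc (b : ℂ) * ((a : ℂ) * lam * p) = (b : ℂ) * ((a : ℂ) * (lam * p)) := by ring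
        _ = (b : ℂ) * ((a : ℂ) * (c : ℂ)) := by rw [hlamp]
        _ = (a : ℂ) * (b : ℂ) * (c : ℂ) := by ring
    have hnAbx : ‖(b : ℂ) • A x‖ = b * a := by
      rw [norm_smul]; simp [abs_of_nonneg (norm_nonneg (A y)), ← ha, hbpos.le]
    have hnAay : ‖((a : ℂ) * lam) • A y‖ = a * b := by
      rw [norm_smul, norm_mul, hlamnorm]
      simp [abs_of_nonneg (norm_nonneg (A x)), ← hb, hapos.le]
    have hAu : A u = (b : ℂ) • A x + ((a : ℂ) * lam) • A y := by
      rw [hu]; simp [map_add, map_smul]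
    have hAv : A v = (b : ℂ) • A x - ((a : ℂ) * lam) • A y := by
      rw [hv]; simp [map_sub, map_smul]
    have hnAu : ‖A u‖ ^ 2 = 2 * a ^ 2 * b ^ 2 + 2 * (a * b * c) := by
      rw [hAu, @norm_add_sq ℂ, hAinner, hnAbx, hnAay]
      simp
      ring
    have hnAv : ‖A v‖ ^ 2 = 2 * a ^ 2 * b ^ 2 - 2 * (a * b * c) := by
      rw [hAv, @norm_sub_sq ℂ, hAinner, hnAbx, hnAay]
      simp
      ring
    -- squared bounds
    have h1 : ‖A u‖ ^ 2 ≤ M ^ 2 * ‖u‖ ^ 2 := by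
      have h := pow_le_pow_left₀ (norm_nonneg (A u)) (hup u) 2
      rw [mul_pow] at h; exact h
    have h2 : m ^ 2 * ‖v‖ ^ 2 ≤ ‖A v‖ ^ 2 := by
      have h := pow_le_pow_left₀ (mul_nonneg hm (norm_nonneg v)) (hlow v) 2
      rw [mul_pow] at h; exact h
    rw [hnAu, hnu] at h1
    rw [hnAv, hnv] at h2
    show c ≤ (M ^ 2 - m ^ 2) / (M ^ 2 + m ^ 2) * (a * b)
    rw [div_mul_eq_mul_div, le_div_iff₀ hden]
    have k1 := mul_le_mul_of_nonneg_left h1 (sq_nonneg m)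
    have k2 := mul_le_mul_of_nonneg_left h2 (sq_nonneg M)
    have key : 2 * a * b * c * (M ^ 2 + m ^ 2) ≤ 2 * a * b * (a * b * (M ^ 2 - m ^ 2)) := by
      nlinarith [k1, k2]
    nlinarith [key, mul_pos hapos hbpos]

/-- For nonzero `S, T`:
`ε̂(ST) ≤ (‖S‖²‖T‖² − m(S)²m(T)²)/(‖S‖²‖T‖² + m(S)²m(T)²)`. -/
theorem epsHat_comp_le (hdim : 2 ≤ Module.rank ℂ H)
    (S T : H →L[ℂ] H) (hS : S ≠ 0) (hT : T ≠ 0) :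
    epsHat (S ∘L T) ≤
      (‖S‖ ^ 2 * ‖T‖ ^ 2 - minMod S ^ 2 * minMod T ^ 2) /
        (‖S‖ ^ 2 * ‖T‖ ^ 2 + minMod S ^ 2 * minMod T ^ 2) := by
  have hnt : Nontrivial H := by
    rw [← rank_pos_iff_nontrivial (R := ℂ)]
    exact lt_of_lt_of_le (by norm_num) hdim
  set m : ℝ := minMod S * minMod T with hm
  set M : ℝ := ‖S‖ * ‖T‖ with hM
  have hSpos : 0 < ‖S‖ := norm_pos_iff.mpr hS
  have hTpos : 0 < ‖T‖ := norm_pos_iff.mpr hT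
  have hMpos : 0 < M := mul_pos hSpos hTpos
  have hm0 : 0 ≤ m := mul_nonneg (minMod_nonneg S) (minMod_nonneg T)
  have hmM : m ≤ M :=
    mul_le_mul (minMod_le_norm S) (minMod_le_norm T) (minMod_nonneg T) (norm_nonneg S)
  have hlow : ∀ x, m * ‖x‖ ≤ ‖(S ∘L T) x‖ := by
    intro x
    have h1 : minMod T * ‖x‖ ≤ ‖T x‖ := minMod_mul_le T x
    have h2 : minMod S * ‖T x‖ ≤ ‖S (T x)‖ := minMod_mul_le S (T x)
    have h3 : minMod S * (minMod T * ‖x‖) ≤ minMod S * ‖T x‖ :=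
      mul_le_mul_of_nonneg_left h1 (minMod_nonneg S)
    calc m * ‖x‖ = minMod S * (minMod T * ‖x‖) := by rw [hm]; ring
      _ ≤ ‖S (T x)‖ := le_trans h3 h2
      _ = ‖(S ∘L T) x‖ := rfl
  have hup : ∀ x, ‖(S ∘L T) x‖ ≤ M * ‖x‖ := by
    intro x
    calc ‖(S ∘L T) x‖ = ‖S (T x)‖ := rfl
      _ ≤ ‖S‖ * ‖T x‖ := S.le_opNorm _
      _ ≤ ‖S‖ * (‖T‖ * ‖x‖) := mul_le_mul_of_nonneg_left (T.le_opNorm _) (norm_nonneg S)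
      _ = M * ‖x‖ := by rw [hM]; ring
  have hAOP : IsAOP (S ∘L T) ((M ^ 2 - m ^ 2) / (M ^ 2 + m ^ 2)) :=
    isAOP_of_bounds _ m M hm0 hMpos hmM hlow hup
  have hden : (0:ℝ) < M ^ 2 + m ^ 2 := by positivity
  have hε0 : (0:ℝ) ≤ (M ^ 2 - m ^ 2) / (M ^ 2 + m ^ 2) :=
    div_nonneg (by nlinarith) hden.le
  have hε1 : (M ^ 2 - m ^ 2) / (M ^ 2 + m ^ 2) ≤ 1 := by
    rw [div_le_one hden]; nlinarith
  have hle : epsHat (S ∘L T) ≤ (M ^ 2 - m ^ 2) / (M ^ 2 + m ^ 2) :=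
    csInf_le ⟨0, fun ε hε => hε.1⟩ ⟨hε0, hε1, hAOP⟩
  have heq : (M ^ 2 - m ^ 2) / (M ^ 2 + m ^ 2) =
      (‖S‖ ^ 2 * ‖T‖ ^ 2 - minMod S ^ 2 * minMod T ^ 2) /
        (‖S‖ ^ 2 * ‖T‖ ^ 2 + minMod S ^ 2 * minMod T ^ 2) := by
    rw [hm, hM, mul_pow, mul_pow]
  rwa [heq] at hle
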